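/- Let c_0, c_1, c_2 ∈ R and define S: R^3 → so(3) by S(e_0) = c_0·E_{12}, S(e_1) = -c_1·E_{02}, S(e_2) = c_2·E_{01}, where E_{ij} = e^i⊗e_j - e^j⊗e_i. Define linear maps R^k: ⊗^k R^3 ⊗ Λ²R^3 → so(3) recursively by specifying R^0 diagonal with R^0(e_0∧e_1) = (-c_0c_1+c_1c_2+c_0c_2)E_{01}, R^0(e_1∧e_2) = (c_0c_1-c_1c_2+c_0c_2)E_{12}, R^0(e_0∧e_2) = (c_0c_1+c_1c_2-c_0c_2)E_{02}, and R^{k+1}(X, V_1,...,V_k | ·) = -(S(X)·R^k)(V_1,...,V_k | ·), where A·P denotes the natural so(3)-derivation action. Then for all k ≥ 1, with b(k) = 1 + (k mod 2): R^k(e_0,...,e_0 | e_0∧e_1) = (-1)^{⌊(k-1)/2⌋}·2^k·c_0^{k+1}·(c_1-c_2)·E_{0,b(k)}, R^k(e_0,...,e_0 | e_0∧e_2) = (-1)^{⌊k/2⌋}·2^k·c_0^{k+1}·(c_1-c_2)·E_{0,b(k+1)}, and R^k(e_0,...,e_0 | e_1∧e_2) = 0. -/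

import Mathlib

open Matrix

/-- Standard basis vector of `ℝ³`. -/
noncomputable def e (i : Fin 3) : Fin 3 → ℝ := Pi.single i 1

/-- `E₀₁ = e⁰⊗e₁ - e¹⊗e₀ ∈ so(3)`. -/
def E01 : Matrix (Fin 3) (Fin 3) ℝ := !![0, -1, 0; 1, 0, 0; 0, 0, 0]

/-- `E₀₂ = e⁰⊗e₂ - e²⊗e₀ ∈ so(3)`. -/
def E02 : Matrix (Fin 3) (Fin 3) ℝ := !![0, 0, -1; 0, 0, 0; 1, 0, 0]

/-- `E₁₂ = e¹⊗e₂ - e²⊗e₁ ∈ so(3)`. -/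
def E12 : Matrix (Fin 3) (Fin 3) ℝ := !![0, 0, 0; 0, 0, -1; 0, 1, 0]

noncomputable def wfun (k : ℕ) (a b : Fin 3 → ℝ) : Fin (k+2) → (Fin 3 → ℝ) :=
  fun j => if (j:ℕ) = k then a else if (j:ℕ) = k+1 then b else e 0

lemma wfun_succ (k : ℕ) (a b : Fin 3 → ℝ) :
    wfun (k+1) a b = Fin.cons (e 0) (wfun k a b) := by
  funext j
  refine Fin.cases ?_ (fun i => ?_) j
  · simp [wfun]
  · simp only [Fin.cons_succ, wfun, Fin.val_succ]
    by_cases h1 : (i:ℕ) = k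
    · simp [h1]
    · by_cases h2 : (i:ℕ) = k+1 <;> simp [h1, h2]

lemma update_wfun_fst (k : ℕ) (a b x : Fin 3 → ℝ) :
    Function.update (wfun k a b) ⟨k, by omega⟩ x = wfun k x b := by
  funext j
  rcases eq_or_ne j ⟨k, by omega⟩ with h | h
  · subst h; simp [wfun]
  · rw [Function.update_of_ne h]
    have : (j:ℕ) ≠ k := fun hc => h (Fin.ext hc)
    simp [wfun, this]

lemma update_wfun_snd (k : ℕ) (a b x : Fin 3 → ℝ) :
    Function.update (wfun k a b) ⟨k+1, by omega⟩ x = wfun k a x := by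
  funext j
  rcases eq_or_ne j ⟨k+1, by omega⟩ with h | h
  · subst h; simp [wfun]
  · rw [Function.update_of_ne h]
    have : (j:ℕ) ≠ k+1 := fun hc => h (Fin.ext hc)
    simp only [wfun, this, if_false]

lemma wfun_other (k : ℕ) (a b : Fin 3 → ℝ) (i : Fin (k+2)) (h1 : (i:ℕ) ≠ k) (h2 : (i:ℕ) ≠ k+1) :
    wfun k a b i = e 0 := by simp [wfun, h1, h2]

lemma wfun_zero (a b : Fin 3 → ℝ) : wfun 0 a b = ![a, b] := by
  funext j; fin_cases j <;> simp [wfun]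

lemma wfun_e0form (k : ℕ) (b : Fin 3 → ℝ) :
    wfun k (e 0) b = fun j : Fin (k+2) => if (j:ℕ) = k+1 then b else e 0 := by
  funext j
  by_cases h1 : (j:ℕ) = k
  · simp [wfun, h1]
  · simp [wfun, h1]

lemma comm1 : E12 * E01 - E01 * E12 = E02 := by
  ext i j; fin_cases i <;> fin_cases j <;>
    simp [E01, E02, E12, Matrix.mul_apply, Fin.sum_univ_three, Matrix.vecHead, Matrix.vecTail]

lemma comm2 : E12 * E02 - E02 * E12 = -E01 := by
  ext i j; fin_cases i <;> fin_cases j <;>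
    simp [E01, E02, E12, Matrix.mul_apply, Fin.sum_univ_three, Matrix.vecHead, Matrix.vecTail]

lemma E12_e0 : E12 *ᵥ e 0 = 0 := by
  funext i; fin_cases i <;> simp [E12, Matrix.mulVec, dotProduct, e, Fin.sum_univ_three]

lemma E12_e1 : E12 *ᵥ e 1 = e 2 := by
  funext i; fin_cases i <;> simp [E12, Matrix.mulVec, dotProduct, e, Fin.sum_univ_three, Pi.single]

lemma E12_e2 : E12 *ᵥ e 2 = -e 1 := by
  funext i; fin_cases i <;> simp [E12, Matrix.mulVec, dotProduct, e, Fin.sum_univ_three, Pi.single]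

lemma smul_comm_mul (c a : ℝ) (M X : Matrix (Fin 3) (Fin 3) ℝ) :
    (c • M) * (a • X) - (a • X) * (c • M) = (c * a) • (M * X - X * M) := by
  rw [smul_mul_assoc, smul_mul_assoc, mul_smul_comm, mul_smul_comm, smul_smul, smul_smul,
    mul_comm a c, ← smul_sub]

section Main
variable (c0 : ℝ) (S : (Fin 3 → ℝ) →ₗ[ℝ] Matrix (Fin 3) (Fin 3) ℝ)
  (R : (k : ℕ) → MultilinearMap ℝ (fun _ : Fin (k + 2) => Fin 3 → ℝ)
    (Matrix (Fin 3) (Fin 3) ℝ))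
  (hS0 : S (e 0) = c0 • E12)
  (hrec : ∀ (k : ℕ) (X : Fin 3 → ℝ) (V : Fin (k + 2) → Fin 3 → ℝ),
      R (k + 1) (Fin.cons X V) =
        -((S X) * (R k V) - (R k V) * (S X)) +
          ∑ i : Fin (k + 2), R k (Function.update V i ((S X).mulVec (V i))))

include hS0 hrec in
lemma step (k : ℕ) (a b : Fin 3 → ℝ) :
    R (k+1) (wfun (k+1) a b) =
      -((S (e 0)) * R k (wfun k a b) - R k (wfun k a b) * S (e 0)) +
        (R k (wfun k ((S (e 0)) *ᵥ a) b) + R k (wfun k a ((S (e 0)) *ᵥ b))) := by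
  rw [wfun_succ, hrec]
  congr 1
  rw [Finset.sum_eq_add_of_mem (⟨k, by omega⟩ : Fin (k+2)) ⟨k+1, by omega⟩
    (Finset.mem_univ _) (Finset.mem_univ _) (by simp [Fin.ext_iff])
    (fun i _ hi => ?_)]
  · congr 1
    · rw [show wfun k a b ⟨k, by omega⟩ = a by simp [wfun], update_wfun_fst]
    · rw [show wfun k a b ⟨k+1, by omega⟩ = b by simp [wfun], update_wfun_snd]
  · have h1 : (i:ℕ) ≠ k := fun h => hi.1 (Fin.ext h)
    have h2 : (i:ℕ) ≠ k+1 := fun h => hi.2 (Fin.ext h)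
    rw [wfun_other k a b i h1 h2]
    have : S (e 0) *ᵥ e 0 = 0 := by rw [hS0, Matrix.smul_mulVec, E12_e0, smul_zero]
    rw [this, MultilinearMap.map_update_zero]

include hS0 hrec in
lemma asym (hR0anti : ∀ Y1 Y2 : Fin 3 → ℝ, R 0 ![Y1, Y2] = -R 0 ![Y2, Y1]) :
    ∀ k (a b : Fin 3 → ℝ), R k (wfun k a b) = - R k (wfun k b a) := by
  intro k
  induction k with
  | zero => intro a b; rw [wfun_zero, wfun_zero]; exact hR0anti a b
  | succ k ih =>
    intro a b
    rw [step c0 S R hS0 hrec, step c0 S R hS0 hrec,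
      ih a b, ih ((S (e 0)) *ᵥ a) b, ih a ((S (e 0)) *ᵥ b)]
    simp only [mul_neg, neg_mul, neg_sub]
    abel

include hS0 hrec in
lemma diagzero (hR0anti : ∀ Y1 Y2 : Fin 3 → ℝ, R 0 ![Y1, Y2] = -R 0 ![Y2, Y1])
    (k : ℕ) (v : Fin 3 → ℝ) : R k (wfun k v v) = 0 := by
  have h := asym c0 S R hS0 hrec hR0anti k v v
  have h2 : (2:ℝ) • R k (wfun k v v) = 0 := by
    rw [two_smul]; nth_rewrite 1 [h]; abel
  simpa using smul_eq_zero.mp h2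

lemma Rk_smul_fst (k : ℕ) (c : ℝ) (v b : Fin 3 → ℝ) :
    R k (wfun k (c • v) b) = c • R k (wfun k v b) := by
  rw [← update_wfun_fst k v b (c • v), MultilinearMap.map_update_smul, update_wfun_fst]

lemma Rk_smul_snd (k : ℕ) (c : ℝ) (a v : Fin 3 → ℝ) :
    R k (wfun k a (c • v)) = c • R k (wfun k a v) := by
  rw [← update_wfun_snd k a v (c • v), MultilinearMap.map_update_smul, update_wfun_snd]

lemma Rk_zero_fst (k : ℕ) (b : Fin 3 → ℝ) : R k (wfun k 0 b) = 0 := by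
  rw [← update_wfun_fst k (e 0) b 0, MultilinearMap.map_update_zero]

end Main

/-- Closed formula for the iterated derivation recursion
`R^{k+1}(X,V|·) = -(S(X)·R^k)(V|·)`.  The `k`-th tensor `R k` is a multilinear map in
`k+2` vector slots (the last two being the `Λ²ℝ³` slot); the derivation action of
`A ∈ so(3)` is `[A, P(V)] - Σᵢ P(..., A·Vᵢ, ...)`.  Here `b(k) = 1 + (k mod 2)`, so
`E_{0,b(k)}` is `E₀₂` when `k` is odd and `E₀₁` when `k` is even. -/
theorem iterated_covariant_derivative_formula (c0 c1 c2 : ℝ)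
    (S : (Fin 3 → ℝ) →ₗ[ℝ] Matrix (Fin 3) (Fin 3) ℝ)
    (hS0 : S (e 0) = c0 • E12) (hS1 : S (e 1) = -c1 • E02) (hS2 : S (e 2) = c2 • E01)
    (R : (k : ℕ) → MultilinearMap ℝ (fun _ : Fin (k + 2) => Fin 3 → ℝ)
      (Matrix (Fin 3) (Fin 3) ℝ))
    (hR0anti : ∀ Y1 Y2 : Fin 3 → ℝ, R 0 ![Y1, Y2] = -R 0 ![Y2, Y1])
    (h01 : R 0 ![e 0, e 1] = (-c0 * c1 + c1 * c2 + c0 * c2) • E01)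
    (h12 : R 0 ![e 1, e 2] = (c0 * c1 - c1 * c2 + c0 * c2) • E12)
    (h02 : R 0 ![e 0, e 2] = (c0 * c1 + c1 * c2 - c0 * c2) • E02)
    (hrec : ∀ (k : ℕ) (X : Fin 3 → ℝ) (V : Fin (k + 2) → Fin 3 → ℝ),
      R (k + 1) (Fin.cons X V) =
        -((S X) * (R k V) - (R k V) * (S X)) +
          ∑ i : Fin (k + 2), R k (Function.update V i ((S X).mulVec (V i)))) :
    ∀ k : ℕ, 1 ≤ k →
      (R k (fun j => if (j : ℕ) = k + 1 then e 1 else e 0) =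
        ((-1 : ℝ) ^ ((k - 1) / 2) * 2 ^ k * c0 ^ (k + 1) * (c1 - c2)) •
          (if k % 2 = 1 then E02 else E01)) ∧
      (R k (fun j => if (j : ℕ) = k + 1 then e 2 else e 0) =
        ((-1 : ℝ) ^ (k / 2) * 2 ^ k * c0 ^ (k + 1) * (c1 - c2)) •
          (if (k + 1) % 2 = 1 then E02 else E01)) ∧
      R k (fun j => if (j : ℕ) = k then e 1 else if (j : ℕ) = k + 1 then e 2 else e 0)
        = 0 := by
  have hM1 : S (e 0) *ᵥ e 1 = c0 • e 2 := by
    rw [hS0, Matrix.smul_mulVec, E12_e1]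
  have hM2 : S (e 0) *ᵥ e 2 = (-c0) • e 1 := by
    rw [hS0, Matrix.smul_mulVec, E12_e2, smul_neg, neg_smul]
  have hM0 : S (e 0) *ᵥ e 0 = 0 := by
    rw [hS0, Matrix.smul_mulVec, E12_e0, smul_zero]
  have hA : ∀ k, R (k+1) (wfun (k+1) (e 0) (e 1)) =
      -((c0 • E12) * R k (wfun k (e 0) (e 1)) - R k (wfun k (e 0) (e 1)) * (c0 • E12)) +
        c0 • R k (wfun k (e 0) (e 2)) := by
    intro k
    rw [step c0 S R hS0 hrec, hM0, hM1, Rk_zero_fst, Rk_smul_snd, hS0, zero_add]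
  have hB : ∀ k, R (k+1) (wfun (k+1) (e 0) (e 2)) =
      -((c0 • E12) * R k (wfun k (e 0) (e 2)) - R k (wfun k (e 0) (e 2)) * (c0 • E12)) +
        (-c0) • R k (wfun k (e 0) (e 1)) := by
    intro k
    rw [step c0 S R hS0 hrec, hM0, hM2, Rk_zero_fst, Rk_smul_snd, hS0, zero_add]
  have hC : ∀ k, R (k+1) (wfun (k+1) (e 1) (e 2)) =
      -((c0 • E12) * R k (wfun k (e 1) (e 2)) - R k (wfun k (e 1) (e 2)) * (c0 • E12)) := by
    intro k
    rw [step c0 S R hS0 hrec, hM1, hM2, Rk_smul_fst, Rk_smul_snd,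
      diagzero c0 S R hS0 hrec hR0anti _ _, diagzero c0 S R hS0 hrec hR0anti _ _, hS0]
    simp
  suffices H : ∀ k : ℕ, 1 ≤ k →
      (R k (wfun k (e 0) (e 1)) =
        ((-1 : ℝ) ^ ((k - 1) / 2) * 2 ^ k * c0 ^ (k + 1) * (c1 - c2)) •
          (if k % 2 = 1 then E02 else E01)) ∧
      (R k (wfun k (e 0) (e 2)) =
        ((-1 : ℝ) ^ (k / 2) * 2 ^ k * c0 ^ (k + 1) * (c1 - c2)) •
          (if (k + 1) % 2 = 1 then E02 else E01)) ∧
      R k (wfun k (e 1) (e 2)) = 0 by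
    intro k hk
    obtain ⟨h1, h2, h3⟩ := H k hk
    refine ⟨?_, ?_, h3⟩
    · rw [← wfun_e0form]; exact h1
    · rw [← wfun_e0form]; exact h2
  intro k hk
  induction k, hk using Nat.le_induction with
  | base =>
    refine ⟨?_, ?_, ?_⟩
    · rw [show (R 1) (wfun 1 (e 0) (e 1)) = R (0+1) (wfun (0+1) (e 0) (e 1)) from rfl, hA 0, wfun_zero, wfun_zero, h01, h02,
        smul_comm_mul, comm1]
      rw [show (if 1 % 2 = 1 then E02 else E01) = E02 from rfl,
        smul_smul, ← neg_smul, ← add_smul]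
      congr 1
      norm_num
      ring
    · rw [show (R 1) (wfun 1 (e 0) (e 2)) = R (0+1) (wfun (0+1) (e 0) (e 2)) from rfl, hB 0, wfun_zero, wfun_zero, h01, h02,
        smul_comm_mul, comm2]
      rw [show (if (1+1) % 2 = 1 then E02 else E01) = E01 from rfl,
        smul_neg, neg_neg, smul_smul, ← add_smul]
      congr 1
      norm_num
      ring
    · rw [show (1:ℕ) = 0 + 1 from rfl, hC 0, wfun_zero, h12, smul_comm_mul]
      simp
  | succ k hk ih =>
    obtain ⟨ihA, ihB, ihC⟩ := ih
    refine ⟨?_, ?_, ?_⟩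
    · rw [hA k, ihA, ihB]
      by_cases hp : k % 2 = 1
      · rw [if_pos hp, if_neg (by omega : ¬(k+1) % 2 = 1),
          smul_comm_mul, comm2, smul_neg, neg_neg, smul_smul, ← add_smul]
        congr 1
        simp only [Nat.add_sub_cancel]
        rw [show (k-1)/2 = k/2 from by omega]
        ring
      · rw [if_neg hp, if_pos (by omega : (k+1) % 2 = 1),
          smul_comm_mul, comm1, smul_smul, ← neg_smul, ← add_smul]
        congr 1
        simp only [Nat.add_sub_cancel]
        rw [show k/2 = (k-1)/2 + 1 from by omega, pow_succ]
        ring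
    · rw [hB k, ihB, ihA]
      by_cases hp : k % 2 = 1
      · rw [if_neg (by omega : ¬(k+1) % 2 = 1), if_pos hp,
          if_pos (by omega : (k+1+1) % 2 = 1),
          smul_comm_mul, comm1, smul_smul, ← neg_smul, ← add_smul]
        congr 1
        rw [show (k-1)/2 = k/2 from by omega, show (k+1)/2 = k/2 + 1 from by omega, pow_succ]
        ring
      · rw [if_pos (by omega : (k+1) % 2 = 1), if_neg hp,
          if_neg (by omega : ¬(k+1+1) % 2 = 1),
          smul_comm_mul, comm2, smul_neg, neg_neg, smul_smul, ← add_smul]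
        congr 1
        rw [show (k+1)/2 = (k-1)/2 + 1 from by omega,
          show k/2 = (k-1)/2 + 1 from by omega, pow_succ]
        ring
    · rw [hC k, ihC]
      simp
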